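/- Let a, b be nonzero integers, q an odd prime with q ∣ a and q ∤ b, and let f, g, h be nonzero integers with q ∤ f·g·h, h squarefree, and h ∣ (a/q). Let x be an integer with x² ≡ b (mod q). In B = ℍ[ℚ, a, b], let O be the ℤ-submodule spanned by 1, g·i, f·h·j, f·g·k, and let O' be the ℤ-submodule spanned by 1, g·i, f·h·j, f·g·k, and (f·g/q)·(x·i + k). Then: (i) O ⊆ O'; (ii) q·O' ⊆ O; (iii) O' is closed under multiplication (so O' is an order containing O); and (iv) O' ≠ O. (Adjoining the element q⁻¹(x − j)·i = q⁻¹(x·i + k), scaled by fg, enlarges the order O exactly at q, lowering its level from qN to N.) -/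

import Mathlib

open Quaternion

set_option maxHeartbeats 4000000 in
/-- Adjoining `(fg/q)·(x·i + k)` to the order spanned by `1, g·i, fh·j, fg·k`
in `ℍ[ℚ, a, b]` (with `q ∣ a`, `q ∤ b`, `x² ≡ b mod q`) enlarges it exactly at `q`. -/
theorem lower_level_q_dvd_a
    (a b : ℤ) (ha : a ≠ 0) (hb : b ≠ 0)
    (q : ℕ) (hq : q.Prime) (hq2 : q ≠ 2)
    (hqa : (q : ℤ) ∣ a) (hqb : ¬ (q : ℤ) ∣ b)
    (f g h : ℤ) (hf : f ≠ 0) (hg : g ≠ 0) (hh : h ≠ 0)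
    (hqfgh : ¬ (q : ℤ) ∣ f * g * h) (hsf : Squarefree h) (hha : h ∣ (a / q))
    (x : ℤ) (hx : x ^ 2 ≡ b [ZMOD (q : ℤ)])
    (O O' : Submodule ℤ ℍ[ℚ, (a : ℚ), (b : ℚ)])
    (hO : O = Submodule.span ℤ
      ({1, ⟨0, (g : ℚ), 0, 0⟩, ⟨0, 0, (f : ℚ) * h, 0⟩, ⟨0, 0, 0, (f : ℚ) * g⟩} :
        Set ℍ[ℚ, (a : ℚ), (b : ℚ)]))
    (hO' : O' = Submodule.span ℤ
      ({1, ⟨0, (g : ℚ), 0, 0⟩, ⟨0, 0, (f : ℚ) * h, 0⟩, ⟨0, 0, 0, (f : ℚ) * g⟩,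
        ⟨0, (f : ℚ) * g * x / q, 0, (f : ℚ) * g / q⟩} :
        Set ℍ[ℚ, (a : ℚ), (b : ℚ)])) :
    O ≤ O' ∧
    (∀ v ∈ O', (q : ℤ) • v ∈ O) ∧
    (∀ u ∈ O', ∀ v ∈ O', u * v ∈ O') ∧
    O' ≠ O := by
  have zq : ∀ (n : ℤ) (r : ℚ), n • r = (n : ℚ) * r := fun n r => by simp
  have hq0 : (q : ℚ) ≠ 0 := Nat.cast_ne_zero.mpr hq.ne_zero
  have hqZ : (q : ℤ) ≠ 0 := Int.natCast_ne_zero.mpr hq.ne_zero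
  obtain ⟨a', ha'⟩ := hqa
  obtain ⟨c, hc⟩ := hx.dvd
  have hdiv : a / (q : ℤ) = a' := by rw [ha', Int.mul_ediv_cancel_left _ hqZ]
  rw [hdiv] at hha
  obtain ⟨h', hh'⟩ := hha
  have haQ : (a : ℚ) = q * a' := by exact_mod_cast congrArg (Int.cast : ℤ → ℚ) ha'
  have hbQ : (b : ℚ) = x ^ 2 + q * c := by
    have hb2 : b = x ^ 2 + (q : ℤ) * c := by linarith [hc]
    exact_mod_cast congrArg (Int.cast : ℤ → ℚ) hb2
  have ha'Q : (a' : ℚ) = h * h' := by exact_mod_cast congrArg (Int.cast : ℤ → ℚ) hh'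
  set G1 : ℍ[ℚ, (a : ℚ), (b : ℚ)] := ⟨0, (g : ℚ), 0, 0⟩ with hG1
  set G2 : ℍ[ℚ, (a : ℚ), (b : ℚ)] := ⟨0, 0, (f : ℚ) * h, 0⟩ with hG2
  set G3 : ℍ[ℚ, (a : ℚ), (b : ℚ)] := ⟨0, 0, 0, (f : ℚ) * g⟩ with hG3
  set G4 : ℍ[ℚ, (a : ℚ), (b : ℚ)] := ⟨0, (f : ℚ) * g * x / q, 0, (f : ℚ) * g / q⟩ with hG4
  -- memberships
  have m0 : (1 : ℍ[ℚ, (a : ℚ), (b : ℚ)]) ∈ O' := hO' ▸ Submodule.subset_span (by simp)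
  have m1 : G1 ∈ O' := hO' ▸ Submodule.subset_span (by simp)
  have m2 : G2 ∈ O' := hO' ▸ Submodule.subset_span (by simp)
  have m3 : G3 ∈ O' := hO' ▸ Submodule.subset_span (by simp)
  have m4 : G4 ∈ O' := hO' ▸ Submodule.subset_span (by simp)
  have n0 : (1 : ℍ[ℚ, (a : ℚ), (b : ℚ)]) ∈ O := hO ▸ Submodule.subset_span (by simp)
  have n1 : G1 ∈ O := hO ▸ Submodule.subset_span (by simp)
  have n2 : G2 ∈ O := hO ▸ Submodule.subset_span (by simp)
  have n3 : G3 ∈ O := hO ▸ Submodule.subset_span (by simp)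
  -- product identities
  have p11 : G1 * G1 = (a * g ^ 2) • (1 : ℍ[ℚ, (a : ℚ), (b : ℚ)]) := by
    ext <;>
      simp only [QuaternionAlgebra.re_mul, QuaternionAlgebra.imI_mul, QuaternionAlgebra.imJ_mul,
        QuaternionAlgebra.imK_mul, QuaternionAlgebra.re_add, QuaternionAlgebra.imI_add,
        QuaternionAlgebra.imJ_add, QuaternionAlgebra.imK_add, QuaternionAlgebra.re_smul,
        QuaternionAlgebra.imI_smul, QuaternionAlgebra.imJ_smul, QuaternionAlgebra.imK_smul,
        QuaternionAlgebra.re_one, QuaternionAlgebra.imI_one, QuaternionAlgebra.imJ_one,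
        QuaternionAlgebra.imK_one, zq] <;>
      push_cast <;> (try simp only [haQ, hbQ, ha'Q]) <;> (try field_simp) <;> (first | ring1 | exact Or.inl (by ring1) | exact Or.inl trivial)
  have p12 : G1 * G2 = h • G3 := by
    ext <;>
      simp only [QuaternionAlgebra.re_mul, QuaternionAlgebra.imI_mul, QuaternionAlgebra.imJ_mul,
        QuaternionAlgebra.imK_mul, QuaternionAlgebra.re_add, QuaternionAlgebra.imI_add,
        QuaternionAlgebra.imJ_add, QuaternionAlgebra.imK_add, QuaternionAlgebra.re_smul,
        QuaternionAlgebra.imI_smul, QuaternionAlgebra.imJ_smul, QuaternionAlgebra.imK_smul,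
        QuaternionAlgebra.re_one, QuaternionAlgebra.imI_one, QuaternionAlgebra.imJ_one,
        QuaternionAlgebra.imK_one, zq] <;>
      push_cast <;> (try simp only [haQ, hbQ, ha'Q]) <;> (try field_simp) <;> (first | ring1 | exact Or.inl (by ring1) | exact Or.inl trivial)
  have p13 : G1 * G3 = (g ^ 2 * q * h') • G2 := by
    ext <;>
      simp only [QuaternionAlgebra.re_mul, QuaternionAlgebra.imI_mul, QuaternionAlgebra.imJ_mul,
        QuaternionAlgebra.imK_mul, QuaternionAlgebra.re_add, QuaternionAlgebra.imI_add,
        QuaternionAlgebra.imJ_add, QuaternionAlgebra.imK_add, QuaternionAlgebra.re_smul,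
        QuaternionAlgebra.imI_smul, QuaternionAlgebra.imJ_smul, QuaternionAlgebra.imK_smul,
        QuaternionAlgebra.re_one, QuaternionAlgebra.imI_one, QuaternionAlgebra.imJ_one,
        QuaternionAlgebra.imK_one, zq] <;>
      push_cast <;> (try simp only [haQ, hbQ, ha'Q]) <;> (try field_simp) <;> (first | ring1 | exact Or.inl (by ring1) | exact Or.inl trivial)
  have p14 : G1 * G4 = (f * g ^ 2 * a' * x) • (1 : ℍ[ℚ, (a : ℚ), (b : ℚ)]) + (g ^ 2 * h') • G2 := by
    ext <;>
      simp only [QuaternionAlgebra.re_mul, QuaternionAlgebra.imI_mul, QuaternionAlgebra.imJ_mul,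
        QuaternionAlgebra.imK_mul, QuaternionAlgebra.re_add, QuaternionAlgebra.imI_add,
        QuaternionAlgebra.imJ_add, QuaternionAlgebra.imK_add, QuaternionAlgebra.re_smul,
        QuaternionAlgebra.imI_smul, QuaternionAlgebra.imJ_smul, QuaternionAlgebra.imK_smul,
        QuaternionAlgebra.re_one, QuaternionAlgebra.imI_one, QuaternionAlgebra.imJ_one,
        QuaternionAlgebra.imK_one, zq] <;>
      push_cast <;> (try simp only [haQ, hbQ, ha'Q, hG1, hG2, hG3, hG4]) <;> (try field_simp) <;> (first | ring1 | exact Or.inl (by ring1) | exact Or.inl trivial)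
  have p21 : G2 * G1 = (-h) • G3 := by
    ext <;>
      simp only [QuaternionAlgebra.re_mul, QuaternionAlgebra.imI_mul, QuaternionAlgebra.imJ_mul,
        QuaternionAlgebra.imK_mul, QuaternionAlgebra.re_add, QuaternionAlgebra.imI_add,
        QuaternionAlgebra.imJ_add, QuaternionAlgebra.imK_add, QuaternionAlgebra.re_smul,
        QuaternionAlgebra.imI_smul, QuaternionAlgebra.imJ_smul, QuaternionAlgebra.imK_smul,
        QuaternionAlgebra.re_one, QuaternionAlgebra.imI_one, QuaternionAlgebra.imJ_one,
        QuaternionAlgebra.imK_one, zq] <;>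
      push_cast <;> (try simp only [haQ, hbQ, ha'Q]) <;> (try field_simp) <;> (first | ring1 | exact Or.inl (by ring1) | exact Or.inl trivial)
  have p22 : G2 * G2 = (f ^ 2 * h ^ 2 * b) • (1 : ℍ[ℚ, (a : ℚ), (b : ℚ)]) := by
    ext <;>
      simp only [QuaternionAlgebra.re_mul, QuaternionAlgebra.imI_mul, QuaternionAlgebra.imJ_mul,
        QuaternionAlgebra.imK_mul, QuaternionAlgebra.re_add, QuaternionAlgebra.imI_add,
        QuaternionAlgebra.imJ_add, QuaternionAlgebra.imK_add, QuaternionAlgebra.re_smul,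
        QuaternionAlgebra.imI_smul, QuaternionAlgebra.imJ_smul, QuaternionAlgebra.imK_smul,
        QuaternionAlgebra.re_one, QuaternionAlgebra.imI_one, QuaternionAlgebra.imJ_one,
        QuaternionAlgebra.imK_one, zq] <;>
      push_cast <;> (try simp only [haQ, hbQ, ha'Q]) <;> (try field_simp) <;> (first | ring1 | exact Or.inl (by ring1) | exact Or.inl trivial)
  have p23 : G2 * G3 = (-(f ^ 2 * h * b)) • G1 := by
    ext <;>
      simp only [QuaternionAlgebra.re_mul, QuaternionAlgebra.imI_mul, QuaternionAlgebra.imJ_mul,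
        QuaternionAlgebra.imK_mul, QuaternionAlgebra.re_add, QuaternionAlgebra.imI_add,
        QuaternionAlgebra.imJ_add, QuaternionAlgebra.imK_add, QuaternionAlgebra.re_smul,
        QuaternionAlgebra.imI_smul, QuaternionAlgebra.imJ_smul, QuaternionAlgebra.imK_smul,
        QuaternionAlgebra.re_one, QuaternionAlgebra.imI_one, QuaternionAlgebra.imJ_one,
        QuaternionAlgebra.imK_one, zq] <;>
      push_cast <;> (try simp only [haQ, hbQ, ha'Q]) <;> (try field_simp) <;> (first | ring1 | exact Or.inl (by ring1) | exact Or.inl trivial)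
  have p24 : G2 * G4 = (-(f * h * x)) • G4 + (-(f ^ 2 * h * c)) • G1 := by
    ext <;>
      simp only [QuaternionAlgebra.re_mul, QuaternionAlgebra.imI_mul, QuaternionAlgebra.imJ_mul,
        QuaternionAlgebra.imK_mul, QuaternionAlgebra.re_add, QuaternionAlgebra.imI_add,
        QuaternionAlgebra.imJ_add, QuaternionAlgebra.imK_add, QuaternionAlgebra.re_smul,
        QuaternionAlgebra.imI_smul, QuaternionAlgebra.imJ_smul, QuaternionAlgebra.imK_smul,
        QuaternionAlgebra.re_one, QuaternionAlgebra.imI_one, QuaternionAlgebra.imJ_one,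
        QuaternionAlgebra.imK_one, zq] <;>
      push_cast <;> (try simp only [haQ, hbQ, ha'Q, hG1, hG2, hG3, hG4]) <;> (try field_simp) <;> (first | ring1 | exact Or.inl (by ring1) | exact Or.inl trivial)
  have p31 : G3 * G1 = (-(g ^ 2 * q * h')) • G2 := by
    ext <;>
      simp only [QuaternionAlgebra.re_mul, QuaternionAlgebra.imI_mul, QuaternionAlgebra.imJ_mul,
        QuaternionAlgebra.imK_mul, QuaternionAlgebra.re_add, QuaternionAlgebra.imI_add,
        QuaternionAlgebra.imJ_add, QuaternionAlgebra.imK_add, QuaternionAlgebra.re_smul,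
        QuaternionAlgebra.imI_smul, QuaternionAlgebra.imJ_smul, QuaternionAlgebra.imK_smul,
        QuaternionAlgebra.re_one, QuaternionAlgebra.imI_one, QuaternionAlgebra.imJ_one,
        QuaternionAlgebra.imK_one, zq] <;>
      push_cast <;> (try simp only [haQ, hbQ, ha'Q]) <;> (try field_simp) <;> (first | ring1 | exact Or.inl (by ring1) | exact Or.inl trivial)
  have p32 : G3 * G2 = (f ^ 2 * h * b) • G1 := by
    ext <;>
      simp only [QuaternionAlgebra.re_mul, QuaternionAlgebra.imI_mul, QuaternionAlgebra.imJ_mul,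
        QuaternionAlgebra.imK_mul, QuaternionAlgebra.re_add, QuaternionAlgebra.imI_add,
        QuaternionAlgebra.imJ_add, QuaternionAlgebra.imK_add, QuaternionAlgebra.re_smul,
        QuaternionAlgebra.imI_smul, QuaternionAlgebra.imJ_smul, QuaternionAlgebra.imK_smul,
        QuaternionAlgebra.re_one, QuaternionAlgebra.imI_one, QuaternionAlgebra.imJ_one,
        QuaternionAlgebra.imK_one, zq] <;>
      push_cast <;> (try simp only [haQ, hbQ, ha'Q]) <;> (try field_simp) <;> (first | ring1 | exact Or.inl (by ring1) | exact Or.inl trivial)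
  have p33 : G3 * G3 = (-(a * b * f ^ 2 * g ^ 2)) • (1 : ℍ[ℚ, (a : ℚ), (b : ℚ)]) := by
    ext <;>
      simp only [QuaternionAlgebra.re_mul, QuaternionAlgebra.imI_mul, QuaternionAlgebra.imJ_mul,
        QuaternionAlgebra.imK_mul, QuaternionAlgebra.re_add, QuaternionAlgebra.imI_add,
        QuaternionAlgebra.imJ_add, QuaternionAlgebra.imK_add, QuaternionAlgebra.re_smul,
        QuaternionAlgebra.imI_smul, QuaternionAlgebra.imJ_smul, QuaternionAlgebra.imK_smul,
        QuaternionAlgebra.re_one, QuaternionAlgebra.imI_one, QuaternionAlgebra.imJ_one,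
        QuaternionAlgebra.imK_one, zq] <;>
      push_cast <;> (try simp only [haQ, hbQ, ha'Q]) <;> (try field_simp) <;> (first | ring1 | exact Or.inl (by ring1) | exact Or.inl trivial)
  have p34 : G3 * G4 = (-(f ^ 2 * g ^ 2 * a' * b)) • (1 : ℍ[ℚ, (a : ℚ), (b : ℚ)]) + (-(f * g ^ 2 * x * h')) • G2 := by
    ext <;>
      simp only [QuaternionAlgebra.re_mul, QuaternionAlgebra.imI_mul, QuaternionAlgebra.imJ_mul,
        QuaternionAlgebra.imK_mul, QuaternionAlgebra.re_add, QuaternionAlgebra.imI_add,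
        QuaternionAlgebra.imJ_add, QuaternionAlgebra.imK_add, QuaternionAlgebra.re_smul,
        QuaternionAlgebra.imI_smul, QuaternionAlgebra.imJ_smul, QuaternionAlgebra.imK_smul,
        QuaternionAlgebra.re_one, QuaternionAlgebra.imI_one, QuaternionAlgebra.imJ_one,
        QuaternionAlgebra.imK_one, zq] <;>
      push_cast <;> (try simp only [haQ, hbQ, ha'Q, hG1, hG2, hG3, hG4]) <;> (try field_simp) <;> (first | ring1 | exact Or.inl (by ring1) | exact Or.inl trivial)
  have p41 : G4 * G1 = (f * g ^ 2 * a' * x) • (1 : ℍ[ℚ, (a : ℚ), (b : ℚ)]) + (-(g ^ 2 * h')) • G2 := by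
    ext <;>
      simp only [QuaternionAlgebra.re_mul, QuaternionAlgebra.imI_mul, QuaternionAlgebra.imJ_mul,
        QuaternionAlgebra.imK_mul, QuaternionAlgebra.re_add, QuaternionAlgebra.imI_add,
        QuaternionAlgebra.imJ_add, QuaternionAlgebra.imK_add, QuaternionAlgebra.re_smul,
        QuaternionAlgebra.imI_smul, QuaternionAlgebra.imJ_smul, QuaternionAlgebra.imK_smul,
        QuaternionAlgebra.re_one, QuaternionAlgebra.imI_one, QuaternionAlgebra.imJ_one,
        QuaternionAlgebra.imK_one, zq] <;>
      push_cast <;> (try simp only [haQ, hbQ, ha'Q, hG1, hG2, hG3, hG4]) <;> (try field_simp) <;> (first | ring1 | exact Or.inl (by ring1) | exact Or.inl trivial)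
  have p42 : G4 * G2 = (f * h * x) • G4 + (f ^ 2 * h * c) • G1 := by
    ext <;>
      simp only [QuaternionAlgebra.re_mul, QuaternionAlgebra.imI_mul, QuaternionAlgebra.imJ_mul,
        QuaternionAlgebra.imK_mul, QuaternionAlgebra.re_add, QuaternionAlgebra.imI_add,
        QuaternionAlgebra.imJ_add, QuaternionAlgebra.imK_add, QuaternionAlgebra.re_smul,
        QuaternionAlgebra.imI_smul, QuaternionAlgebra.imJ_smul, QuaternionAlgebra.imK_smul,
        QuaternionAlgebra.re_one, QuaternionAlgebra.imI_one, QuaternionAlgebra.imJ_one,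
        QuaternionAlgebra.imK_one, zq] <;>
      push_cast <;> (try simp only [haQ, hbQ, ha'Q, hG1, hG2, hG3, hG4]) <;> (try field_simp) <;> (first | ring1 | exact Or.inl (by ring1) | exact Or.inl trivial)
  have p43 : G4 * G3 = (-(f ^ 2 * g ^ 2 * a' * b)) • (1 : ℍ[ℚ, (a : ℚ), (b : ℚ)]) + (f * g ^ 2 * x * h') • G2 := by
    ext <;>
      simp only [QuaternionAlgebra.re_mul, QuaternionAlgebra.imI_mul, QuaternionAlgebra.imJ_mul,
        QuaternionAlgebra.imK_mul, QuaternionAlgebra.re_add, QuaternionAlgebra.imI_add,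
        QuaternionAlgebra.imJ_add, QuaternionAlgebra.imK_add, QuaternionAlgebra.re_smul,
        QuaternionAlgebra.imI_smul, QuaternionAlgebra.imJ_smul, QuaternionAlgebra.imK_smul,
        QuaternionAlgebra.re_one, QuaternionAlgebra.imI_one, QuaternionAlgebra.imJ_one,
        QuaternionAlgebra.imK_one, zq] <;>
      push_cast <;> (try simp only [haQ, hbQ, ha'Q, hG1, hG2, hG3, hG4]) <;> (try field_simp) <;> (first | ring1 | exact Or.inl (by ring1) | exact Or.inl trivial)
  have p44 : G4 * G4 = (-(f ^ 2 * g ^ 2 * a' * c)) • (1 : ℍ[ℚ, (a : ℚ), (b : ℚ)]) := by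
    ext <;>
      simp only [QuaternionAlgebra.re_mul, QuaternionAlgebra.imI_mul, QuaternionAlgebra.imJ_mul,
        QuaternionAlgebra.imK_mul, QuaternionAlgebra.re_add, QuaternionAlgebra.imI_add,
        QuaternionAlgebra.imJ_add, QuaternionAlgebra.imK_add, QuaternionAlgebra.re_smul,
        QuaternionAlgebra.imI_smul, QuaternionAlgebra.imJ_smul, QuaternionAlgebra.imK_smul,
        QuaternionAlgebra.re_one, QuaternionAlgebra.imI_one, QuaternionAlgebra.imJ_one,
        QuaternionAlgebra.imK_one, zq] <;>
      push_cast <;> (try simp only [haQ, hbQ, ha'Q, hG1, hG2, hG3, hG4]) <;> (try field_simp) <;> (first | ring1 | exact Or.inl (by ring1) | exact Or.inl trivial)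
  -- q • G4 ∈ O
  have pq4 : (q : ℤ) • G4 = (f * x) • G1 + G3 := by
    ext <;>
      simp only [QuaternionAlgebra.re_mul, QuaternionAlgebra.imI_mul, QuaternionAlgebra.imJ_mul,
        QuaternionAlgebra.imK_mul, QuaternionAlgebra.re_add, QuaternionAlgebra.imI_add,
        QuaternionAlgebra.imJ_add, QuaternionAlgebra.imK_add, QuaternionAlgebra.re_smul,
        QuaternionAlgebra.imI_smul, QuaternionAlgebra.imJ_smul, QuaternionAlgebra.imK_smul,
        QuaternionAlgebra.re_one, QuaternionAlgebra.imI_one, QuaternionAlgebra.imJ_one,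
        QuaternionAlgebra.imK_one, zq] <;>
      push_cast <;> (try simp only [haQ, hbQ, ha'Q, hG1, hG2, hG3, hG4]) <;> (try field_simp) <;> (first | ring1 | exact Or.inl (by ring1) | exact Or.inl trivial)
  -- Part (i)
  have part1 : O ≤ O' := by
    rw [hO, hO']
    refine Submodule.span_mono ?_
    intro y hy
    simp only [Set.mem_insert_iff, Set.mem_singleton_iff] at hy ⊢
    tauto
  -- Part (ii)
  have part2 : ∀ v ∈ O', (q : ℤ) • v ∈ O := by
    intro v hv
    rw [hO'] at hv
    induction hv using Submodule.span_induction with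
    | mem y hy =>
      simp only [Set.mem_insert_iff, Set.mem_singleton_iff] at hy
      rcases hy with rfl | rfl | rfl | rfl | rfl
      · exact Submodule.smul_mem _ _ n0
      · exact Submodule.smul_mem _ _ n1
      · exact Submodule.smul_mem _ _ n2
      · exact Submodule.smul_mem _ _ n3
      · rw [pq4]; exact add_mem (Submodule.smul_mem _ _ n1) n3
    | zero => rw [smul_zero]; exact zero_mem _
    | add u w hu hw ihu ihw => rw [smul_add]; exact add_mem ihu ihw
    | smul t u hu ihu => rw [smul_comm]; exact Submodule.smul_mem _ _ ihu
  -- Part (iii)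
  have part3 : ∀ u ∈ O', ∀ v ∈ O', u * v ∈ O' := by
    have hgen : ∀ u ∈ ({1, G1, G2, G3, G4} : Set ℍ[ℚ, (a : ℚ), (b : ℚ)]),
        ∀ v ∈ ({1, G1, G2, G3, G4} : Set ℍ[ℚ, (a : ℚ), (b : ℚ)]), u * v ∈ O' := by
      intro u hu v hv
      simp only [Set.mem_insert_iff, Set.mem_singleton_iff] at hu hv
      rcases hu with rfl | rfl | rfl | rfl | rfl <;>
        rcases hv with rfl | rfl | rfl | rfl | rfl
      · rw [one_mul]; exact m0
      · rw [one_mul]; exact m1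
      · rw [one_mul]; exact m2
      · rw [one_mul]; exact m3
      · rw [one_mul]; exact m4
      · rw [mul_one]; exact m1
      · rw [p11]; exact Submodule.smul_mem _ _ m0
      · rw [p12]; exact Submodule.smul_mem _ _ m3
      · rw [p13]; exact Submodule.smul_mem _ _ m2
      · rw [p14]; exact add_mem (Submodule.smul_mem _ _ m0) (Submodule.smul_mem _ _ m2)
      · rw [mul_one]; exact m2
      · rw [p21]; exact Submodule.smul_mem _ _ m3
      · rw [p22]; exact Submodule.smul_mem _ _ m0
      · rw [p23]; exact Submodule.smul_mem _ _ m1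
      · rw [p24]; exact add_mem (Submodule.smul_mem _ _ m4) (Submodule.smul_mem _ _ m1)
      · rw [mul_one]; exact m3
      · rw [p31]; exact Submodule.smul_mem _ _ m2
      · rw [p32]; exact Submodule.smul_mem _ _ m1
      · rw [p33]; exact Submodule.smul_mem _ _ m0
      · rw [p34]; exact add_mem (Submodule.smul_mem _ _ m0) (Submodule.smul_mem _ _ m2)
      · rw [mul_one]; exact m4
      · rw [p41]; exact add_mem (Submodule.smul_mem _ _ m0) (Submodule.smul_mem _ _ m2)
      · rw [p42]; exact add_mem (Submodule.smul_mem _ _ m4) (Submodule.smul_mem _ _ m1)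
      · rw [p43]; exact add_mem (Submodule.smul_mem _ _ m0) (Submodule.smul_mem _ _ m2)
      · rw [p44]; exact Submodule.smul_mem _ _ m0
    intro u hu
    rw [hO'] at hu
    induction hu using Submodule.span_induction with
    | mem y hy =>
      intro v hv
      rw [hO'] at hv
      induction hv using Submodule.span_induction with
      | mem z hz => exact hgen y hy z hz
      | zero => rw [mul_zero]; exact zero_mem _
      | add u' w' hu' hw' ihu ihw => rw [mul_add]; exact add_mem ihu ihw
      | smul t u' hu' ihu => rw [mul_smul_comm]; exact Submodule.smul_mem _ _ ihu
    | zero => intro v hv; rw [zero_mul]; exact zero_mem _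
    | add u' w' hu' hw' ihu ihw =>
      intro v hv; rw [add_mul]; exact add_mem (ihu v hv) (ihw v hv)
    | smul t u' hu' ihu =>
      intro v hv; rw [smul_mul_assoc]; exact Submodule.smul_mem _ _ (ihu v hv)
  -- Part (iv)
  have part4 : O' ≠ O := by
    intro heq
    have hm : G4 ∈ O := heq ▸ m4
    have key : ∀ v ∈ O, ∃ n : ℤ, QuaternionAlgebra.imK v = n * (f * g) := by
      intro v hv
      rw [hO] at hv
      induction hv using Submodule.span_induction with
      | mem y hy =>
        simp only [Set.mem_insert_iff, Set.mem_singleton_iff] at hy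
        rcases hy with rfl | rfl | rfl | rfl
        · exact ⟨0, by simp⟩
        · exact ⟨0, by simp [hG1]⟩
        · exact ⟨0, by simp [hG2]⟩
        · exact ⟨1, by push_cast [hG3]; simp⟩
      | zero => exact ⟨0, by simp⟩
      | add u w hu hw ihu ihw =>
        obtain ⟨n, hn⟩ := ihu; obtain ⟨m', hm'⟩ := ihw
        exact ⟨n + m', by simp [hn, hm']; push_cast; ring⟩
      | smul t u hu ihu =>
        obtain ⟨n, hn⟩ := ihu
        exact ⟨t * n, by simp [hn, zsmul_eq_mul, QuaternionAlgebra.re_mul, QuaternionAlgebra.imI_mul, QuaternionAlgebra.imJ_mul, QuaternionAlgebra.imK_mul, QuaternionAlgebra.re_intCast, QuaternionAlgebra.imI_intCast, QuaternionAlgebra.imJ_intCast, QuaternionAlgebra.imK_intCast]; push_cast; ring⟩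
    obtain ⟨n, hn⟩ := key G4 hm
    have hfg : ((f : ℚ) * g) ≠ 0 := by
      push_cast
      exact mul_ne_zero (Int.cast_ne_zero.mpr hf) (Int.cast_ne_zero.mpr hg)
    have hK : QuaternionAlgebra.imK G4 = (f : ℚ) * g / q := rfl
    rw [hK] at hn
    have h1 : (1 : ℚ) = n * q := by
      field_simp at hn
      have h2 : ((f : ℚ) * g) * 1 = ((f : ℚ) * g) * ((n : ℚ) * q) := by
        linear_combination ((f : ℚ) * g) * hn
      exact (mul_left_cancel₀ hfg h2).symm ▸ rfl
    have h1' : (1 : ℤ) = n * q := by exact_mod_cast h1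
    have : (q : ℤ) ∣ 1 := ⟨n, by linarith [h1']⟩
    have := Int.le_of_dvd one_pos this
    have hq1 : (2 : ℤ) ≤ q := by exact_mod_cast hq.two_le
    omega
  exact ⟨part1, part2, part3, part4⟩
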